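/- Let V be a finite-dimensional real vector space with a representation of SL(2,ℝ), and suppose V = ⨁_{ω∈ℝ} V^ω(B) is the eigenspace decomposition for B = {b(t) = diag(e^t,e^{-t})}, i.e., V^ω(B) = {v : b(t)v = e^{ωt}v for all t}. For nonzero v, let ω_max(v) = max{ω : the V^ω-component of v is nonzero}. Then for every r ≠ 0 and every nonzero v ∈ V, ω_max(u(r)·v) ≥ −ω_max(v), where u(r) = [[1,r],[0,1]]. In particular, if ω_max(v) < 0 then ω_max(u(r)v) > 0 for all r ≠ 0. -/

import Mathlib

open Real Finset Polynomial

private lemma rpow_shift {c : ℝ} (hc : 0 < c) (q : ℝ) : c ^ (q - 1) * c = c ^ q := by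
  have : c ^ q = c ^ (q - 1 + 1) := by norm_num
  rw [this, Real.rpow_add hc, Real.rpow_one]

private lemma CLaux (p : ℝ) (hp : p < 0) (T : Finset ℝ) :
    ∀ (m : ℕ) (e : ℕ → ℝ) (k : ℝ → ℝ), e m ≠ 0 →
      (∀ c : ℝ, 0 < c →
        ∑ i ∈ Finset.range (m+1), e i * (1+c) ^ (p - i) = ∑ a ∈ T, k a * c ^ a) →
      False := by
  induction T using Finset.strongInduction with
  | _ T ih =>
  intro m e k hem H
  rcases T.eq_empty_or_nonempty with rfl | ⟨a, ha⟩
  · -- base case : sum of (1+c)^(p-i) vanishes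
    have H0 : ∀ c : ℝ, 0 < c → ∑ i ∈ Finset.range (m+1), e i * (1+c) ^ (p - i) = 0 := by
      simpa using H
    set P : Polynomial ℝ := ∑ i ∈ Finset.range (m+1), Polynomial.C (e i) * Polynomial.X ^ (m - i)
      with hP
    have hroots : ∀ u : ℝ, 1 < u → P.IsRoot u := by
      intro u hu
      have hc : (0:ℝ) < u - 1 := by linarith
      have h1u : (0:ℝ) < 1 + (u - 1) := by linarith
      have h0 := H0 (u - 1) hc
      have h2 : (∑ i ∈ Finset.range (m+1), e i * (1+(u-1)) ^ (p - i)) * (1+(u-1)) ^ ((m:ℝ) - p)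
          = 0 := by rw [h0, zero_mul]
      rw [Finset.sum_mul] at h2
      have h3 : ∀ i ∈ Finset.range (m+1),
          e i * (1+(u-1)) ^ (p - i) * (1+(u-1)) ^ ((m:ℝ) - p)
            = e i * (1+(u-1)) ^ (m - i : ℕ) := by
        intro i hi
        have him : i ≤ m := Nat.lt_succ_iff.mp (Finset.mem_range.mp hi)
        rw [mul_assoc, ← Real.rpow_add h1u, ← Real.rpow_natCast (1+(u-1)) (m-i)]
        congr 2
        push_cast [Nat.cast_sub him]
        ring
      rw [Finset.sum_congr rfl h3] at h2
      have : P.eval u = 0 := by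
        rw [hP]
        simp only [Polynomial.eval_finset_sum, Polynomial.eval_mul, Polynomial.eval_C,
          Polynomial.eval_pow, Polynomial.eval_X]
        have : (1:ℝ) + (u - 1) = u := by ring
        rw [this] at h2
        exact h2
      exact this
    have hPzero : P = 0 := by
      apply Polynomial.eq_zero_of_infinite_isRoot
      exact Set.Infinite.mono (fun u hu => hroots u hu) (Set.Ioi_infinite 1)
    have hcoeff : P.coeff 0 = e m := by
      rw [hP, Polynomial.finset_sum_coeff]
      rw [Finset.sum_eq_single m]
      · simp
      · intro i hi hne
        have him : i < m := lt_of_le_of_ne (Nat.lt_succ_iff.mp (Finset.mem_range.mp hi)) hne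
        simp only [Polynomial.coeff_C_mul, Polynomial.coeff_X_pow]
        rw [if_neg (by omega), mul_zero]
      · intro h; exact absurd (Finset.self_mem_range_succ m) h
    rw [hPzero] at hcoeff
    simp at hcoeff
    exact hem hcoeff.symm
  · -- inductive step : apply c·d/dc − a
    set F : ℝ → ℝ := fun c => ∑ i ∈ Finset.range (m+1), e i * (1+c) ^ (p - i) with hF
    set G : ℝ → ℝ := fun c => ∑ a' ∈ T, k a' * c ^ a' with hG
    have hFd : ∀ c : ℝ, 0 < c →
        HasDerivAt F (∑ i ∈ Finset.range (m+1), e i * ((p - i) * (1+c) ^ (p - i - 1))) c := by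
      intro c hc
      apply HasDerivAt.fun_sum
      intro i _
      have h1 : HasDerivAt (fun x : ℝ => (1+x)) 1 c := (hasDerivAt_id c).const_add 1
      have h2 : HasDerivAt (fun y : ℝ => y ^ (p - i)) ((p - i) * (1+c) ^ (p - i - 1)) (1+c) :=
        Real.hasDerivAt_rpow_const (Or.inl (by positivity))
      have := (h2.comp c h1)
      simpa using this.const_mul (e i)
    have hGd : ∀ c : ℝ, 0 < c →
        HasDerivAt G (∑ a' ∈ T, k a' * (a' * c ^ (a' - 1))) c := by
      intro c hc
      apply HasDerivAt.fun_sum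
      intro a' _
      exact (Real.hasDerivAt_rpow_const (Or.inl hc.ne')).const_mul (k a')
    have hderiv_eq : ∀ c : ℝ, 0 < c →
        ∑ i ∈ Finset.range (m+1), e i * ((p - i) * (1+c) ^ (p - i - 1))
          = ∑ a' ∈ T, k a' * (a' * c ^ (a' - 1)) := by
      intro c hc
      have hEq : G =ᶠ[nhds c] F :=
        Filter.eventuallyEq_of_mem (Ioi_mem_nhds hc) (fun y hy => (H y hy).symm)
      exact ((hFd c hc).congr_of_eventuallyEq hEq).unique (hGd c hc)
    -- new data
    obtain ⟨e', he'⟩ : ∃ e' : ℕ → ℝ, ∀ j, e' j =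
        (if j < m + 1 then e j * (p - j - a) else 0) -
          (if j = 0 then 0 else e (j-1) * (p - (j-1 : ℕ))) := ⟨_, fun j => rfl⟩
    have hem' : e' (m+1) ≠ 0 := by
      have h1 : (p : ℝ) - m ≠ 0 := by
        have : (0:ℝ) ≤ m := Nat.cast_nonneg m
        intro h; nlinarith
      rw [he']
      rw [if_neg (by omega), if_neg (by omega)]
      simp only [Nat.add_sub_cancel, zero_sub, neg_ne_zero]
      exact mul_ne_zero hem h1
    apply ih (T.erase a) (Finset.erase_ssubset ha) (m+1) e' (fun a' => k a' * (a' - a)) hem'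
    intro c hc
    have h1c : (0:ℝ) < 1 + c := by linarith
    -- compute c * F' c - a * F c = c * G' c - a * G c
    have key : c * (∑ i ∈ Finset.range (m+1), e i * ((p - i) * (1+c) ^ (p - i - 1)))
        - a * F c = c * (∑ a' ∈ T, k a' * (a' * c ^ (a' - 1))) - a * G c := by
      have hFG : F c = G c := H c hc
      rw [hderiv_eq c hc, hFG]
    -- RHS simplification
    have hRHS : c * (∑ a' ∈ T, k a' * (a' * c ^ (a' - 1))) - a * G c
        = ∑ a' ∈ T.erase a, (k a' * (a' - a)) * c ^ a' := by
      rw [Finset.sum_erase _ (by simp)]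
      rw [hG, Finset.mul_sum, Finset.mul_sum, ← Finset.sum_sub_distrib]
      apply Finset.sum_congr rfl
      intro a' _
      have : c * (k a' * (a' * c ^ (a' - 1))) = k a' * a' * (c ^ (a'-1) * c) := by ring
      rw [this, rpow_shift hc]
      ring
    -- LHS simplification
    have hLHS : c * (∑ i ∈ Finset.range (m+1), e i * ((p - i) * (1+c) ^ (p - i - 1)))
        - a * F c = ∑ j ∈ Finset.range (m+2), e' j * (1+c) ^ (p - j) := by
      have hsplit : ∀ i : ℕ, c * (e i * ((p - i) * (1+c) ^ (p - i - 1)))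
          = e i * (p - i) * (1+c) ^ (p - i) - e i * (p - i) * (1+c) ^ (p - i - 1) := by
        intro i
        have h2 : (1+c) ^ (p - i - 1) * (1+c) = (1+c) ^ (p - i) := rpow_shift h1c _
        calc c * (e i * ((p - i) * (1+c) ^ (p - i - 1)))
            = e i * (p - i) * ((1+c) ^ (p - i - 1) * (1+c))
              - e i * (p - i) * (1+c) ^ (p - i - 1) := by ring
          _ = _ := by rw [h2]
      rw [Finset.mul_sum, hF]
      simp only [hsplit]
      rw [Finset.sum_sub_distrib, Finset.mul_sum]
      -- goal: Σ (e i (p-i) x^{p-i}) - Σ (e i (p-i) x^{p-i-1}) - Σ (a * (e i x^{p-i}))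
      --        = Σ_{j<m+2} e' j x^{p-j}
      have hB : ∑ i ∈ Finset.range (m+1), e i * (p - i) * (1+c) ^ (p - i - 1)
          = ∑ j ∈ Finset.range (m+2),
              (if j = 0 then 0 else e (j-1) * (p - (j-1 : ℕ))) * (1+c) ^ (p - j) := by
        conv_rhs => rw [Finset.sum_range_succ']
        have hterm : ∀ i ∈ Finset.range (m+1),
            (if i+1 = 0 then (0:ℝ) else e (i+1-1) * (p - ((i+1-1 : ℕ) : ℝ)))
              * (1+c) ^ (p - ((i+1 : ℕ) : ℝ))
            = e i * (p - i) * (1+c) ^ (p - i - 1) := by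
          intro i _
          rw [if_neg (Nat.succ_ne_zero i)]
          simp only [Nat.add_sub_cancel]
          have hexp : p - ((i+1 : ℕ) : ℝ) = p - i - 1 := by push_cast; ring
          rw [hexp]
        rw [Finset.sum_congr rfl hterm]
        simp
      have hA : ∑ i ∈ Finset.range (m+1), (e i * (p - i) - a * e i) * (1+c) ^ (p - i)
          = ∑ j ∈ Finset.range (m+2),
              (if j < m + 1 then e j * (p - j - a) else 0) * (1+c) ^ (p - j) := by
        conv_rhs => rw [Finset.sum_range_succ]
        rw [if_neg (by omega), zero_mul, add_zero]
        apply Finset.sum_congr rfl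
        intro i hi
        rw [if_pos (Finset.mem_range.mp hi)]
        ring
      calc ∑ i ∈ Finset.range (m+1), e i * (p - i) * (1+c) ^ (p - i)
            - ∑ i ∈ Finset.range (m+1), e i * (p - i) * (1+c) ^ (p - i - 1)
            - ∑ i ∈ Finset.range (m+1), a * (e i * (1+c) ^ (p - i))
          = ∑ i ∈ Finset.range (m+1), (e i * (p - i) - a * e i) * (1+c) ^ (p - i)
            - ∑ i ∈ Finset.range (m+1), e i * (p - i) * (1+c) ^ (p - i - 1) := by
            rw [sub_right_comm]
            congr 1
            rw [← Finset.sum_sub_distrib]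
            exact Finset.sum_congr rfl (fun i _ => by ring)
        _ = _ := by
            rw [hA, hB, ← Finset.sum_sub_distrib]
            apply Finset.sum_congr rfl
            intro j _
            rw [he' j]
            ring
    rw [hLHS, hRHS] at key
    exact key

private lemma CL (p : ℝ) (hp : p < 0) (T : Finset ℝ) (k : ℝ → ℝ)
    (H : ∀ c : ℝ, 0 < c → (1+c) ^ p = ∑ a ∈ T, k a * c ^ a) : False := by
  apply CLaux p hp T 0 (fun _ => 1) k one_ne_zero
  intro c hc
  simpa using H c hc

open Real Finset

private abbrev SL2 := Matrix.SpecialLinearGroup (Fin 2) ℝ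

private def uMat (s : ℝ) : SL2 := ⟨!![1, s; 0, 1], by simp [Matrix.det_fin_two_of]⟩
private def lMat (s : ℝ) : SL2 := ⟨!![1, 0; s, 1], by simp [Matrix.det_fin_two_of]⟩
private noncomputable def bMat (t : ℝ) : SL2 :=
  ⟨!![Real.exp t, 0; 0, Real.exp (-t)], by
    simp [Matrix.det_fin_two_of, ← Real.exp_add]⟩

private lemma uMat_coe (s : ℝ) : (uMat s : Matrix (Fin 2) (Fin 2) ℝ) = !![1, s; 0, 1] := rfl

private lemma uMat_mul (a b : ℝ) : uMat a * uMat b = uMat (a + b) := by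
  apply Subtype.ext
  rw [Matrix.SpecialLinearGroup.coe_mul]
  show (!![1, a; 0, 1] : Matrix (Fin 2) (Fin 2) ℝ) * !![1, b; 0, 1] = !![1, a + b; 0, 1]
  rw [Matrix.mul_fin_two]
  norm_num [add_comm]

private lemma lMat_mul (a b : ℝ) : lMat a * lMat b = lMat (a + b) := by
  apply Subtype.ext
  rw [Matrix.SpecialLinearGroup.coe_mul]
  show (!![1, 0; a, 1] : Matrix (Fin 2) (Fin 2) ℝ) * !![1, 0; b, 1] = !![1, 0; a + b, 1]
  rw [Matrix.mul_fin_two]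
  norm_num [add_comm]

private lemma uMat_zero : uMat 0 = 1 := by
  apply Subtype.ext
  show (!![1, 0; 0, 1] : Matrix (Fin 2) (Fin 2) ℝ) = 1
  ext i j; fin_cases i <;> fin_cases j <;> simp [Matrix.one_apply]

private lemma bMat_uMat (t s : ℝ) : bMat t * uMat s = uMat (s * Real.exp (2 * t)) * bMat t := by
  apply Subtype.ext
  rw [Matrix.SpecialLinearGroup.coe_mul, Matrix.SpecialLinearGroup.coe_mul]
  show (!![Real.exp t, 0; 0, Real.exp (-t)] : Matrix (Fin 2) (Fin 2) ℝ) * !![1, s; 0, 1]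
      = !![1, s * Real.exp (2*t); 0, 1] * !![Real.exp t, 0; 0, Real.exp (-t)]
  rw [Matrix.mul_fin_two, Matrix.mul_fin_two]
  have h2 : s * Real.exp (2*t) * Real.exp (-t) = Real.exp t * s := by
    rw [mul_assoc, ← Real.exp_add]; ring_nf
  norm_num [h2]

private lemma bMat_lMat (t s : ℝ) :
    bMat t * lMat s = lMat (s * Real.exp ((-2) * t)) * bMat t := by
  apply Subtype.ext
  rw [Matrix.SpecialLinearGroup.coe_mul, Matrix.SpecialLinearGroup.coe_mul]
  show (!![Real.exp t, 0; 0, Real.exp (-t)] : Matrix (Fin 2) (Fin 2) ℝ) * !![1, 0; s, 1]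
      = !![1, 0; s * Real.exp ((-2)*t), 1] * !![Real.exp t, 0; 0, Real.exp (-t)]
  rw [Matrix.mul_fin_two, Matrix.mul_fin_two]
  have h2 : s * Real.exp (-(2*t)) * Real.exp t = Real.exp (-t) * s := by
    rw [mul_assoc, ← Real.exp_add]; ring_nf
  norm_num [h2]

private lemma wd_eq (r : ℝ) (hr : r ≠ 0) :
    uMat r * lMat (-1/r) * uMat r
      = (⟨!![0, r; -1/r, 0], by rw [Matrix.det_fin_two_of, mul_div_assoc', mul_neg_one, neg_div, div_self hr]; norm_num⟩ : SL2) := by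
  apply Subtype.ext
  rw [Matrix.SpecialLinearGroup.coe_mul, Matrix.SpecialLinearGroup.coe_mul]
  show (!![1, r; 0, 1] : Matrix (Fin 2) (Fin 2) ℝ) * !![1, 0; -1/r, 1] * !![1, r; 0, 1]
      = !![0, r; -1/r, 0]
  rw [Matrix.mul_fin_two, Matrix.mul_fin_two]
  have h1 : 1 + r * (-1/r) = (0:ℝ) := by field_simp; norm_num
  have h2 : -1/r * r + 1 = (0:ℝ) := by field_simp; norm_num
  norm_num [h1]
  simp [h2]

private lemma bMat_wd (r t : ℝ) (hr : r ≠ 0) :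
    bMat t * (uMat r * lMat (-1/r) * uMat r)
      = (uMat r * lMat (-1/r) * uMat r) * bMat (-t) := by
  rw [wd_eq r hr]
  apply Subtype.ext
  show (!![Real.exp t, 0; 0, Real.exp (-t)] : Matrix (Fin 2) (Fin 2) ℝ) * !![0, r; -1/r, 0]
      = !![0, r; -1/r, 0] * !![Real.exp (-t), 0; 0, Real.exp (-(-t))]
  rw [Matrix.mul_fin_two, Matrix.mul_fin_two]
  norm_num [mul_comm]
open Real Finset DirectSum

section CompMachinery

variable {V : Type} [AddCommGroup V] [Module ℝ V]
variable (Vw : ℝ → Submodule ℝ V) [DirectSum.Decomposition Vw]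

/-- the `γ`-component of a vector, as a linear endomorphism. -/
private noncomputable def wcomp (γ : ℝ) : V →ₗ[ℝ] V :=
  (Vw γ).subtype ∘ₗ (DFinsupp.lapply γ) ∘ₗ (DirectSum.decomposeLinearEquiv Vw).toLinearMap

variable {Vw}

private lemma cmp_apply (γ : ℝ) (x : V) :
    wcomp Vw γ x = (DirectSum.decompose Vw x γ : V) := rfl

private lemma cmp_mem (γ : ℝ) (x : V) : wcomp Vw γ x ∈ Vw γ :=
  (DirectSum.decompose Vw x γ).2

private lemma cmp_same {γ : ℝ} {x : V} (hx : x ∈ Vw γ) : wcomp Vw γ x = x := by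
  rw [cmp_apply]; exact DirectSum.decompose_of_mem_same Vw hx

private lemma cmp_ne {ω γ : ℝ} {x : V} (hx : x ∈ Vw ω) (h : ω ≠ γ) : wcomp Vw γ x = 0 := by
  rw [cmp_apply, DirectSum.decompose_of_mem_ne Vw hx h]

open scoped Classical in
/-- the weight support of a vector -/
private noncomputable def wspt (x : V) : Finset ℝ := (DirectSum.decompose Vw x).support

open scoped Classical in
private lemma cmp_sum_support (x : V) : ∑ γ ∈ wspt (Vw := Vw) x, wcomp Vw γ x = x := by
  classical
  simpa [cmp_apply, wspt] using DirectSum.sum_support_decompose Vw x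

open scoped Classical in
private lemma cmp_not_mem_spt {γ : ℝ} {x : V} (h : γ ∉ wspt (Vw := Vw) x) : wcomp Vw γ x = 0 := by
  classical
  rw [cmp_apply]
  rw [DFinsupp.notMem_support_iff.mp (by simpa [wspt] using h)]
  rfl

open scoped Classical in
private lemma cmp_mem_spt {γ : ℝ} {x : V} (h : γ ∈ wspt (Vw := Vw) x) : wcomp Vw γ x ≠ 0 := by
  classical
  intro h0
  have h1 : DirectSum.decompose Vw x γ ≠ 0 := DFinsupp.mem_support_iff.mp (by simpa [wspt] using h)
  exact h1 (by
    apply Subtype.ext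
    simpa [cmp_apply] using h0)

private lemma cmp_eq_zero_of_forall {x : V} (h : ∀ γ, wcomp Vw γ x = 0) : x = 0 := by
  rw [← cmp_sum_support (Vw := Vw) x]
  exact Finset.sum_eq_zero fun γ _ => h γ

end CompMachinery

section NL

variable {V : Type} [AddCommGroup V] [Module ℝ V] [FiniteDimensional ℝ V]
variable {Vw : ℝ → Submodule ℝ V} [DirectSum.Decomposition Vw]

/-- components commute with the weight-diagonal operators -/
private lemma cmp_B (B : ℝ → Module.End ℝ V)
    (hBw : ∀ (ω : ℝ) (x : V), x ∈ Vw ω → ∀ t, B t x = Real.exp (ω*t) • x)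
    (γ t : ℝ) (x : V) :
    wcomp Vw γ (B t x) = Real.exp (γ*t) • wcomp Vw γ x := by
  classical
  conv_lhs => rw [← cmp_sum_support (Vw := Vw) x]
  rw [map_sum, map_sum]
  by_cases hγ : γ ∈ wspt (Vw := Vw) x
  · rw [Finset.sum_eq_single γ]
    · rw [hBw γ _ (cmp_mem γ x) t, map_smul, cmp_same (cmp_mem γ x)]
    · intro ω hω hne
      rw [hBw ω _ (cmp_mem ω x) t, map_smul, cmp_ne (cmp_mem ω x) hne, smul_zero]
    · intro h; exact absurd hγ h
  · rw [Finset.sum_eq_zero, cmp_not_mem_spt hγ, smul_zero]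
    intro ω hω
    have hne : ω ≠ γ := fun h => hγ (h ▸ hω)
    rw [hBw ω _ (cmp_mem ω x) t, map_smul, cmp_ne (cmp_mem ω x) hne, smul_zero]

/-- The key non-lowering lemma for one-parameter unipotent-type families. -/
private lemma NLlemma (B N : ℝ → Module.End ℝ V) (κ : ℝ) (hκ : κ ≠ 0)
    (hBw : ∀ (ω : ℝ) (x : V), x ∈ Vw ω → ∀ t, B t x = Real.exp (ω*t) • x)
    (hconj : ∀ t s x, B t (N s x) = N (s * Real.exp (κ*t)) (B t x))
    (hadd : ∀ s₁ s₂ (x : V), N s₁ (N s₂ x) = N (s₁ + s₂) x)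
    (s μ γ : ℝ) (x : V) (hx : x ∈ Vw μ) (hγ : (γ - μ)/κ < 0) :
    wcomp Vw γ (N s x) = 0 := by
  classical
  set y0 := N s x with hy0
  by_contra hne
  -- scaling sublemma
  have SC : ∀ (β t : ℝ) (z : V), z ∈ Vw β →
      N (s * Real.exp (κ*t)) z = Real.exp (-β*t) • B t (N s z) := by
    intro β t z hz
    have h4 : B t (Real.exp (-β*t) • z) = z := by
      rw [map_smul, hBw β z hz t, smul_smul, ← Real.exp_add]
      norm_num
    have h1 : Real.exp (-β*t) • B t (N s z) = N (s * Real.exp (κ*t)) z := by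
      calc Real.exp (-β*t) • B t (N s z)
          = B t (N s (Real.exp (-β*t) • z)) := by rw [map_smul, map_smul]
        _ = N (s * Real.exp (κ*t)) (B t (Real.exp (-β*t) • z)) := hconj t s _
        _ = N (s * Real.exp (κ*t)) z := by rw [h4]
    exact h1.symm
  -- the functional identity
  have key : ∀ h : ℝ,
      ((1 + Real.exp (κ*h)) ^ ((γ-μ)/κ)) • wcomp Vw γ y0
        = ∑ β ∈ wspt (Vw := Vw) y0, Real.exp ((γ-β)*h) • wcomp Vw γ (N s (wcomp Vw β y0)) := by
    intro h
    have hXpos : (0:ℝ) < 1 + Real.exp (κ*h) := by positivity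
    set τ := Real.log (1 + Real.exp (κ*h)) / κ with hτ
    have hexpτ : Real.exp (κ*τ) = 1 + Real.exp (κ*h) := by
      rw [hτ, mul_div_cancel₀ _ hκ, Real.exp_log hXpos]
    -- LHS computation
    have hL : N (s + s * Real.exp (κ*h)) x = Real.exp (-μ*τ) • B τ y0 := by
      have : s + s * Real.exp (κ*h) = s * Real.exp (κ*τ) := by rw [hexpτ]; ring
      rw [this, SC μ τ x hx]
    -- RHS computation
    have hR : N (s * Real.exp (κ*h)) y0 = N (s + s * Real.exp (κ*h)) x := by
      rw [hy0, hadd]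
      congr 1
      ring
    -- take γ components
    have hcomp : wcomp Vw γ (N (s * Real.exp (κ*h)) y0)
        = Real.exp ((γ-μ)*τ) • wcomp Vw γ y0 := by
      rw [hR, hL, map_smul, cmp_B B hBw, smul_smul, ← Real.exp_add]
      congr 2
      ring
    have hcomp2 : wcomp Vw γ (N (s * Real.exp (κ*h)) y0)
        = ∑ β ∈ wspt (Vw := Vw) y0, Real.exp ((γ-β)*h) • wcomp Vw γ (N s (wcomp Vw β y0)) := by
      conv_lhs => rw [show N (s * Real.exp (κ*h)) y0
        = N (s * Real.exp (κ*h)) (∑ β ∈ wspt (Vw := Vw) y0, wcomp Vw β y0) by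
          rw [cmp_sum_support]]
      rw [map_sum, map_sum]
      apply Finset.sum_congr rfl
      intro β hβ
      rw [SC β h _ (cmp_mem β y0), map_smul, cmp_B B hBw, smul_smul, ← Real.exp_add]
      congr 1
      ring
    have hrpow : Real.exp ((γ-μ)*τ) = (1 + Real.exp (κ*h)) ^ ((γ-μ)/κ) := by
      rw [Real.rpow_def_of_pos hXpos, hτ]
      congr 1
      field_simp
    rw [← hcomp2, hcomp, hrpow]
  -- pick a dual functional
  obtain ⟨φ, hφ⟩ : ∃ φ : Module.Dual ℝ V, φ (wcomp Vw γ y0) ≠ 0 := by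
    by_contra hcon
    push_neg at hcon
    exact hne ((Module.forall_dual_apply_eq_zero_iff ℝ (wcomp Vw γ y0)).mp hcon)
  set Y := φ (wcomp Vw γ y0) with hY
  -- build the CL data
  apply CL ((γ-μ)/κ) hγ ((wspt (Vw := Vw) y0).image (fun β => (γ-β)/κ))
    (fun a => φ (wcomp Vw γ (N s (wcomp Vw (γ - κ*a) y0))) / Y)
  intro c hc
  have hββ : ∀ β : ℝ, γ - κ*((γ-β)/κ) = β := by
    intro β; field_simp; ring
  have hinj : ∀ b1 ∈ wspt (Vw := Vw) y0, ∀ b2 ∈ wspt (Vw := Vw) y0,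
      (γ-b1)/κ = (γ-b2)/κ → b1 = b2 := by
    intro b1 _ b2 _ hb
    have := congrArg (fun z => γ - κ*z) hb
    simpa [hββ] using this
  rw [Finset.sum_image hinj]
  have hkey := key (Real.log c / κ)
  have hexph : Real.exp (κ * (Real.log c / κ)) = c := by
    rw [mul_div_cancel₀ _ hκ, Real.exp_log hc]
  rw [hexph] at hkey
  have hkeyφ := congrArg φ hkey
  rw [map_smul, map_sum, smul_eq_mul] at hkeyφ
  have hterm : ∀ β : ℝ, φ (Real.exp ((γ-β)*(Real.log c / κ)) • wcomp Vw γ (N s (wcomp Vw β y0)))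
      = c ^ ((γ-β)/κ) * φ (wcomp Vw γ (N s (wcomp Vw β y0))) := by
    intro β
    rw [map_smul, smul_eq_mul]
    congr 1
    rw [Real.rpow_def_of_pos hc]
    congr 1
    ring
  rw [Finset.sum_congr rfl (fun β _ => hterm β)] at hkeyφ
  have hY0 : Y ≠ 0 := hφ
  calc (1+c) ^ ((γ-μ)/κ)
      = ((1+c) ^ ((γ-μ)/κ) * Y) / Y := by field_simp
    _ = (∑ β ∈ wspt (Vw := Vw) y0,
          c ^ ((γ-β)/κ) * φ (wcomp Vw γ (N s (wcomp Vw β y0)))) / Y := by rw [hkeyφ]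
    _ = ∑ β ∈ wspt (Vw := Vw) y0,
          φ (wcomp Vw γ (N s (wcomp Vw (γ - κ*((γ-β)/κ)) y0))) / Y * c ^ ((γ-β)/κ) := by
        rw [Finset.sum_div]
        apply Finset.sum_congr rfl
        intro β _
        rw [hββ β]
        ring

end NL
theorem stmt_14 (V : Type) [AddCommGroup V] [Module ℝ V] [FiniteDimensional ℝ V]
    (ρ : Matrix.SpecialLinearGroup (Fin 2) ℝ →* (V →ₗ[ℝ] V)ˣ)
    (Vw : ℝ → Submodule ℝ V)
    (hdecomp : (⨆ ω : ℝ, Vw ω) = ⊤)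
    (hweight : ∀ (ω : ℝ) (w : V), w ∈ Vw ω →
      ∀ (t : ℝ) (b : Matrix.SpecialLinearGroup (Fin 2) ℝ),
        (b : Matrix (Fin 2) (Fin 2) ℝ) = !![Real.exp t, 0; 0, Real.exp (-t)] →
        (↑(ρ b) : V →ₗ[ℝ] V) w = Real.exp (ω * t) • w)
    (v : V) (hv : v ≠ 0) (r : ℝ) (hr : r ≠ 0)
    (uel : Matrix.SpecialLinearGroup (Fin 2) ℝ)
    (huel : (uel : Matrix (Fin 2) (Fin 2) ℝ) = !![1, r; 0, 1])
    (ωv ωu : ℝ)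
    (hv1 : v ∈ ⨆ (ω : ℝ) (_ : ω ≤ ωv), Vw ω)
    (hv2 : v ∉ ⨆ (ω : ℝ) (_ : ω < ωv), Vw ω)
    (hu1 : (↑(ρ uel) : V →ₗ[ℝ] V) v ∈ ⨆ (ω : ℝ) (_ : ω ≤ ωu), Vw ω)
    (hu2 : (↑(ρ uel) : V →ₗ[ℝ] V) v ∉ ⨆ (ω : ℝ) (_ : ω < ωu), Vw ω) :
    -ωv ≤ ωu ∧ (ωv < 0 → 0 < ωu) := by
  classical
  -- the action as plain endomorphisms
  set R : SL2 → Module.End ℝ V := fun g => (ρ g : V →ₗ[ℝ] V) with hRdef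
  have hRmul : ∀ (g h : SL2) (x : V), R (g * h) x = R g (R h x) := by
    intro g h x
    simp [hRdef, map_mul, Units.val_mul, Module.End.mul_apply]
  have hRinj : ∀ (g : SL2) (y : V), R g y = 0 → y = 0 := by
    intro g y hy
    have h1 : R g⁻¹ (R g y) = y := by
      rw [← hRmul, inv_mul_cancel]
      simp [hRdef, map_one, Units.val_one, Module.End.one_apply]
    rw [hy, map_zero] at h1
    exact h1.symm
  have hwt : ∀ (ω : ℝ) (x : V), x ∈ Vw ω → ∀ t, R (bMat t) x = Real.exp (ω*t) • x :=
    fun ω x hx t => hweight ω x hx t (bMat t) rfl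
  -- independence and decomposition
  have hind : iSupIndep Vw := by
    have h2 : iSupIndep fun (ω : ℝ) => Module.End.eigenspace (R (bMat 1)) (Real.exp ω) :=
      (Module.End.eigenspaces_iSupIndep (R (bMat 1))).comp Real.exp_injective
    refine h2.mono fun ω x hx => Module.End.mem_eigenspace_iff.mpr ?_
    have h3 := hwt ω x hx 1
    rwa [mul_one] at h3
  have hInt : DirectSum.IsInternal Vw :=
    (DirectSum.isInternal_submodule_iff_iSupIndep_and_iSup_eq_top Vw).mpr ⟨hind, hdecomp⟩
  letI : DirectSum.Decomposition Vw := hInt.chooseDecomposition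
  -- support bound lemmas
  have hsupp : ∀ (P : ℝ → Prop) (x : V), x ∈ (⨆ ω, ⨆ (_ : P ω), Vw ω) →
      ∀ γ, ¬ P γ → wcomp Vw γ x = 0 := by
    intro P x hx γ hγ
    rw [iSup_subtype'] at hx
    refine Submodule.iSup_induction (motive := fun y => wcomp Vw γ y = 0) _ hx ?_ (map_zero _) ?_
    · rintro ⟨ω, hP⟩ y hy
      exact cmp_ne hy (fun h => hγ (h ▸ hP))
    · intro a b ha hb
      rw [map_add, ha, hb, add_zero]
  have hmem_sup : ∀ (P : ℝ → Prop) (x : V), (∀ γ, wcomp Vw γ x ≠ 0 → P γ) →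
      x ∈ (⨆ ω, ⨆ (_ : P ω), Vw ω) := by
    intro P x hP
    rw [← cmp_sum_support (Vw := Vw) x]
    apply Submodule.sum_mem
    intro γ _
    by_cases h0 : wcomp Vw γ x = 0
    · rw [h0]; exact Submodule.zero_mem _
    · exact Submodule.mem_iSup_of_mem γ (Submodule.mem_iSup_of_mem (hP γ h0) (cmp_mem γ x))
  -- joint eigenvectors lie in Vw
  have hE : ∀ (z : V) (ω : ℝ), (∀ t, R (bMat t) z = Real.exp (ω*t) • z) → z ∈ Vw ω := by
    intro z ω hz
    have hcomp0 : ∀ γ, γ ≠ ω → wcomp Vw γ z = 0 := by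
      intro γ hγ
      have h1 := congrArg (wcomp Vw γ) (hz 1)
      rw [map_smul, cmp_B (fun t => R (bMat t)) hwt] at h1
      have h2 : (Real.exp (γ*1) - Real.exp (ω*1)) • wcomp Vw γ z = 0 := by
        rw [sub_smul, h1, sub_self]
      have h3 : Real.exp (γ*1) - Real.exp (ω*1) ≠ 0 := by
        rw [mul_one, mul_one]
        exact sub_ne_zero.mpr (fun h => hγ (Real.exp_injective h))
      exact (smul_eq_zero.mp h2).resolve_left h3
    rw [← cmp_sum_support (Vw := Vw) z]
    apply Submodule.sum_mem
    intro γ _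
    by_cases hγω : γ = ω
    · subst hγω; exact cmp_mem γ z
    · rw [hcomp0 γ hγω]; exact Submodule.zero_mem _
  -- the Weyl-type element flips weights
  have hflip : ∀ (ω : ℝ) (x : V), x ∈ Vw ω →
      R (uMat r * lMat (-1/r) * uMat r) x ∈ Vw (-ω) := by
    intro ω x hx
    apply hE
    intro t
    have h1 : R (bMat t) (R (uMat r * lMat (-1/r) * uMat r) x)
        = R (uMat r * lMat (-1/r) * uMat r) (R (bMat (-t)) x) := by
      rw [← hRmul, ← hRmul, bMat_wd r t hr]
    rw [h1, hwt ω x hx (-t), map_smul, show ω*(-t) = (-ω)*t by ring]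
  -- non-lowering for upper unipotents
  have hNLu : ∀ (s μ γ : ℝ) (x : V), x ∈ Vw μ → γ < μ →
      wcomp Vw γ (R (uMat s) x) = 0 := by
    intro s μ γ x hx hγ
    refine NLlemma (fun t => R (bMat t)) (fun s => R (uMat s)) 2 two_ne_zero hwt ?_ ?_
      s μ γ x hx (by linarith)
    · intro t s' x'
      rw [← hRmul, ← hRmul, bMat_uMat t s']
    · intro s₁ s₂ x'
      rw [← hRmul, uMat_mul]
  -- non-raising for lower unipotents
  have hNLl : ∀ (s μ γ : ℝ) (x : V), x ∈ Vw μ → μ < γ →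
      wcomp Vw γ (R (lMat s) x) = 0 := by
    intro s μ γ x hx hγ
    refine NLlemma (fun t => R (bMat t)) (fun s => R (lMat s)) (-2) (by norm_num) hwt ?_ ?_
      s μ γ x hx (by rw [show (γ-μ)/(-2) = (μ-γ)/2 by ring]; linarith)
    · intro t s' x'
      rw [← hRmul, ← hRmul, bMat_lMat t s']
    · intro s₁ s₂ x'
      rw [← hRmul, lMat_mul]
  -- setup of vectors
  have huel_eq : uel = uMat r := Subtype.ext (huel.trans (uMat_coe r).symm)
  have hUV1 : R (uMat r) v ∈ ⨆ (ω : ℝ) (_ : ω ≤ ωu), Vw ω := by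
    rw [← huel_eq]; exact hu1
  set z : V := R (lMat (-1/r)) (R (uMat r) v) with hzdef
  set Z : V := R (uMat r) z with hZdef
  have hZwd : Z = R (uMat r * lMat (-1/r) * uMat r) v := by
    rw [hZdef, hzdef, ← hRmul, ← hRmul]
  -- (i): top component of v is nonzero
  have hπv : wcomp Vw ωv v ≠ 0 := by
    intro h0
    apply hv2
    apply hmem_sup (fun ω => ω < ωv) v
    intro γ hγ
    have h1 : γ ≤ ωv := by
      by_contra hgt
      exact hγ (hsupp (fun ω => ω ≤ ωv) v hv1 γ hgt)
    rcases lt_or_eq_of_le h1 with h | h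
    · exact h
    · exact absurd (h ▸ h0) hγ
  -- components of Z
  have hZlow : ∀ γ, γ < -ωv → wcomp Vw γ Z = 0 := by
    intro γ hγ
    rw [hZwd]
    conv_lhs => rw [← cmp_sum_support (Vw := Vw) v, map_sum, map_sum]
    apply Finset.sum_eq_zero
    intro ω hω
    have hωv' : ω ≤ ωv := by
      by_contra hgt
      exact cmp_mem_spt hω (hsupp (fun ω => ω ≤ ωv) v hv1 ω hgt)
    exact cmp_ne (hflip ω _ (cmp_mem ω v)) (by intro h; rw [← h] at hγ; linarith)
  have hπZ : wcomp Vw (-ωv) Z ≠ 0 := by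
    have hsptv : ωv ∈ wspt (Vw := Vw) v := by
      by_contra h
      exact hπv (cmp_not_mem_spt h)
    have hcompZ : wcomp Vw (-ωv) Z = R (uMat r * lMat (-1/r) * uMat r) (wcomp Vw ωv v) := by
      rw [hZwd]
      conv_lhs => rw [← cmp_sum_support (Vw := Vw) v, map_sum, map_sum]
      rw [Finset.sum_eq_single ωv]
      · exact cmp_same (hflip ωv _ (cmp_mem ωv v))
      · intro ω _ hne
        exact cmp_ne (hflip ω _ (cmp_mem ω v)) (by intro h; exact hne (by linarith [neg_injective h]))
      · intro h; exact absurd hsptv h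
    rw [hcompZ]
    intro h0
    exact hπv (hRinj _ _ h0)
  -- components of z from above
  have hzhigh : ∀ γ, ωu < γ → wcomp Vw γ z = 0 := by
    intro γ hγ
    rw [hzdef]
    conv_lhs => rw [← cmp_sum_support (Vw := Vw) (R (uMat r) v), map_sum, map_sum]
    apply Finset.sum_eq_zero
    intro μ hμ
    have hμu : μ ≤ ωu := by
      by_contra hgt
      exact cmp_mem_spt hμ (hsupp (fun ω => ω ≤ ωu) _ hUV1 μ hgt)
    exact hNLl (-1/r) μ γ _ (cmp_mem μ _) (lt_of_le_of_lt hμu hγ)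
  -- components of z from below
  have hzZ : R (uMat (-r)) Z = z := by
    rw [hZdef, ← hRmul, uMat_mul, neg_add_cancel, uMat_zero]
    simp [hRdef, map_one, Units.val_one, Module.End.one_apply]
  have hzlow : ∀ γ, γ < -ωv → wcomp Vw γ z = 0 := by
    intro γ hγ
    rw [← hzZ]
    conv_lhs => rw [← cmp_sum_support (Vw := Vw) Z, map_sum, map_sum]
    apply Finset.sum_eq_zero
    intro μ hμ
    have hμZ : -ωv ≤ μ := by
      by_contra hgt
      push_neg at hgt
      exact cmp_mem_spt hμ (hZlow μ hgt)
    exact hNLu (-r) μ γ _ (cmp_mem μ _) (lt_of_lt_of_le hγ hμZ)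
  -- conclusion
  have hmain : -ωv ≤ ωu := by
    by_contra hlt
    push_neg at hlt
    have hz0 : z = 0 := by
      apply cmp_eq_zero_of_forall (Vw := Vw)
      intro γ
      rcases le_or_gt γ ωu with h | h
      · exact hzlow γ (lt_of_le_of_lt h hlt)
      · exact hzhigh γ h
    apply hπZ
    rw [hZdef, hz0]
    simp
  exact ⟨hmain, fun h => lt_of_lt_of_le (by linarith) hmain⟩
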